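/- Let T > 0, σ ≥ 0, Δ ∈ ℝ, and let the temporary price impact be f(ν) = a₁ν + a₂ with a₁ > 0 and the permanent price impact be g(ν) = b₁ν with b₁ ∈ ℝ. Define H(t,S,q) = q(S − Δ/2 − a₂) − (b₁/2 + a₁/(T−t)) q². Then at every point (t,S,q) with 0 ≤ t < T and q ≥ 0, H satisfies the HJB equation: ∂ₜH(t,S,q) + (σ²/2) ∂²_{SS}H(t,S,q) + sup_{ν ≥ 0} { −b₁ν ∂_S H(t,S,q) − ν ∂_q H(t,S,q) + (S − Δ/2 − a₁ν − a₂)ν } = 0. -/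

import Mathlib

/-- Value function for the optimal liquidation problem with linear temporary
price impact `f(ν) = a₁ν + a₂` and linear permanent price impact `g(ν) = b₁ν`. -/
noncomputable def Hlin (T Δ a₁ a₂ b₁ : ℝ) (t S q : ℝ) : ℝ :=
  q * (S - Δ / 2 - a₂) - (b₁ / 2 + a₁ / (T - t)) * q ^ 2

/-- With linear TPI and linear PPI, the candidate value function
`H(t,S,q) = q(S − Δ/2 − a₂) − (b₁/2 + a₁/(T−t)) q²` satisfies the HJB equation
`∂ₜH + (σ²/2)∂²_{SS}H + sup_{ν ≥ 0} {−b₁ν ∂_S H − ν ∂_q H + (S − Δ/2 − a₁ν − a₂)ν} = 0`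
at every point with `0 ≤ t < T` and `q ≥ 0`. -/
theorem stmt_0 (T σ Δ a₁ a₂ b₁ : ℝ) (hT : 0 < T) (hσ : 0 ≤ σ) (ha₁ : 0 < a₁)
    (t S q : ℝ) (ht0 : 0 ≤ t) (htT : t < T) (hq : 0 ≤ q) :
    deriv (fun τ => Hlin T Δ a₁ a₂ b₁ τ S q) t
      + σ ^ 2 / 2 * deriv (deriv (fun s => Hlin T Δ a₁ a₂ b₁ t s q)) S
      + sSup {y : ℝ | ∃ ν : ℝ, 0 ≤ ν ∧ y =
          -(b₁ * ν) * deriv (fun s => Hlin T Δ a₁ a₂ b₁ t s q) S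
          - ν * deriv (fun p => Hlin T Δ a₁ a₂ b₁ t S p) q
          + (S - Δ / 2 - a₁ * ν - a₂) * ν} = 0 := by
  have hTt : 0 < T - t := sub_pos.mpr htT
  have hne : T - t ≠ 0 := ne_of_gt hTt
  -- time derivative
  have hdt : deriv (fun τ => Hlin T Δ a₁ a₂ b₁ τ S q) t
      = -(a₁ / (T - t) ^ 2 * q ^ 2) := by
    have h1 : HasDerivAt (fun τ : ℝ => T - τ) (-1) t := by
      simpa using (hasDerivAt_id t).const_sub T
    have h2 : HasDerivAt (fun τ : ℝ => a₁ / (T - τ)) (a₁ / (T - t) ^ 2) t := by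
      have := (hasDerivAt_const t a₁).div h1 hne
      exact this.congr_deriv (by ring)
    have h3 : HasDerivAt (fun τ => Hlin T Δ a₁ a₂ b₁ τ S q)
        (-(a₁ / (T - t) ^ 2 * q ^ 2)) t := by
      unfold Hlin
      exact ((h2.const_add (b₁ / 2)).mul_const (q ^ 2)).const_sub _
    exact h3.deriv
  -- S derivative (first)
  have hdS : deriv (fun s => Hlin T Δ a₁ a₂ b₁ t s q) = fun _ => q := by
    funext s
    have h : HasDerivAt (fun s => Hlin T Δ a₁ a₂ b₁ t s q) q s := by
      unfold Hlin
      have : HasDerivAt (fun s : ℝ => q * (s - Δ / 2 - a₂)) (q * 1) s :=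
        (((hasDerivAt_id s).sub_const (Δ / 2)).sub_const a₂).const_mul q
      simpa using this.sub_const ((b₁ / 2 + a₁ / (T - t)) * q ^ 2)
    exact h.deriv
  have hdSS : deriv (deriv (fun s => Hlin T Δ a₁ a₂ b₁ t s q)) S = 0 := by
    rw [hdS]; simp
  -- q derivative
  have hdq : deriv (fun p => Hlin T Δ a₁ a₂ b₁ t S p) q
      = (S - Δ / 2 - a₂) - (b₁ / 2 + a₁ / (T - t)) * (2 * q) := by
    have h : HasDerivAt (fun p => Hlin T Δ a₁ a₂ b₁ t S p)
        ((S - Δ / 2 - a₂) - (b₁ / 2 + a₁ / (T - t)) * (2 * q)) q := by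
      unfold Hlin
      have h1 : HasDerivAt (fun p : ℝ => p * (S - Δ / 2 - a₂)) (S - Δ / 2 - a₂) q := by
        simpa using (hasDerivAt_id q).mul_const (S - Δ / 2 - a₂)
      have h2 : HasDerivAt (fun p : ℝ => (b₁ / 2 + a₁ / (T - t)) * p ^ 2)
          ((b₁ / 2 + a₁ / (T - t)) * (2 * q)) q := by
        have := (hasDerivAt_pow 2 q).const_mul (b₁ / 2 + a₁ / (T - t))
        simpa [mul_comm] using this
      exact h1.sub h2
    exact h.deriv
  rw [hdt, hdSS, hdS, hdq]
  -- compute the supremum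
  have hM : sSup {y : ℝ | ∃ ν : ℝ, 0 ≤ ν ∧ y =
      -(b₁ * ν) * q
      - ν * ((S - Δ / 2 - a₂) - (b₁ / 2 + a₁ / (T - t)) * (2 * q))
      + (S - Δ / 2 - a₁ * ν - a₂) * ν} = a₁ / (T - t) ^ 2 * q ^ 2 := by
    apply IsGreatest.csSup_eq
    constructor
    · refine ⟨q / (T - t), div_nonneg hq hTt.le, ?_⟩
      field_simp
      ring
    · rintro y ⟨ν, hν, rfl⟩
      have key : -(b₁ * ν) * q
          - ν * ((S - Δ / 2 - a₂) - (b₁ / 2 + a₁ / (T - t)) * (2 * q))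
          + (S - Δ / 2 - a₁ * ν - a₂) * ν
          = a₁ / (T - t) ^ 2 * q ^ 2 - a₁ * (ν - q / (T - t)) ^ 2 := by
        field_simp
        ring
      rw [key]
      have : 0 ≤ a₁ * (ν - q / (T - t)) ^ 2 :=
        mul_nonneg ha₁.le (sq_nonneg _)
      linarith
  rw [hM]
  ring
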